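/- (Dirac mass rigidity) Let F̄ ∈ ℝ^{3×2} have distinct singular values λ_M(F̄) > λ_m(F̄) ≥ 0, and let ν be a (compactly supported, for definiteness) probability measure on ℝ^{3×2} with barycenter ∫ G dν(G) = F̄ and such that ν-almost every G has the same singular values as F̄: λ_M(G) = λ_M(F̄) and λ_m(G) = λ_m(F̄). Then ν is the Dirac mass at F̄. -/

import Mathlib

open Matrix MeasureTheory

def svdD (a b : ℝ) : Matrix (Fin 3) (Fin 2) ℝ := fun i j =>
  if i = 0 ∧ j = 0 then a else if i = 1 ∧ j = 1 then b else 0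

def HasSingularValues (F : Matrix (Fin 3) (Fin 2) ℝ) (a b : ℝ) : Prop :=
  a ≥ b ∧ b ≥ 0 ∧ ∃ (Q : Matrix (Fin 3) (Fin 3) ℝ) (R : Matrix (Fin 2) (Fin 2) ℝ),
    Q * Qᵀ = 1 ∧ Q.det = 1 ∧ R * Rᵀ = 1 ∧ F = Q * svdD a b * R

/-- isometry of orthogonal matrices on dot products -/
lemma svd_iso {n : ℕ} (M : Matrix (Fin n) (Fin n) ℝ) (h : Mᵀ * M = 1) (a b : Fin n → ℝ) :
    (M *ᵥ a) ⬝ᵥ (M *ᵥ b) = a ⬝ᵥ b := by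
  rw [Matrix.dotProduct_mulVec, ← Matrix.vecMul_transpose, Matrix.vecMul_vecMul, h,
    Matrix.vecMul_one]

lemma svd_opnorm {G : Matrix (Fin 3) (Fin 2) ℝ} {lM lm : ℝ}
    (h : HasSingularValues G lM lm) (v : Fin 2 → ℝ) :
    (G *ᵥ v) ⬝ᵥ (G *ᵥ v) ≤ lM ^ 2 * (v ⬝ᵥ v) := by
  obtain ⟨h1, h2, Q, R, hQ, -, hR, rfl⟩ := h
  have hQ' : Qᵀ * Q = 1 := mul_eq_one_comm.mp hQ
  have hR' : Rᵀ * R = 1 := mul_eq_one_comm.mp hR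
  have e1 : (Q * svdD lM lm * R) *ᵥ v = Q *ᵥ (svdD lM lm *ᵥ (R *ᵥ v)) := by
    rw [Matrix.mulVec_mulVec, Matrix.mulVec_mulVec, Matrix.mul_assoc]
  rw [e1, svd_iso Q hQ']
  have hv : v ⬝ᵥ v = (R *ᵥ v) ⬝ᵥ (R *ᵥ v) := (svd_iso R hR' v v).symm
  rw [hv]
  set w := R *ᵥ v with hw
  have hnn : 0 ≤ lM + lm := by linarith
  have key : 0 ≤ (lM - lm) * (lM + lm) * (w 1) ^ 2 :=
    mul_nonneg (mul_nonneg (by linarith) hnn) (sq_nonneg _)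
  simp only [svdD, Matrix.mulVec, dotProduct, Fin.sum_univ_three, Fin.sum_univ_two]
  simp only [Fin.isValue, show (0 : Fin 3) ≠ 1 by decide, show (1 : Fin 3) ≠ 0 by decide,
    show (2 : Fin 3) ≠ 0 by decide, show (2 : Fin 3) ≠ 1 by decide,
    show (0 : Fin 2) ≠ 1 by decide, show (1 : Fin 2) ≠ 0 by decide]
  norm_num
  nlinarith [key]

lemma svd_frob {G : Matrix (Fin 3) (Fin 2) ℝ} {lM lm : ℝ}
    (h : HasSingularValues G lM lm) :
    ∑ i : Fin 3, ∑ j : Fin 2, G i j ^ 2 = lM ^ 2 + lm ^ 2 := by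
  obtain ⟨h1, h2, Q, R, hQ, -, hR, rfl⟩ := h
  have hQ' : Qᵀ * Q = 1 := mul_eq_one_comm.mp hQ
  have key : ∑ i : Fin 3, ∑ j : Fin 2, (Q * svdD lM lm * R) i j ^ 2
      = Matrix.trace ((Q * svdD lM lm * R)ᵀ * (Q * svdD lM lm * R)) := by
    rw [Matrix.trace]
    simp only [Matrix.diag, Matrix.mul_apply, Matrix.transpose_apply, sq]
    rw [Finset.sum_comm]
  rw [key]
  have e2 : (Q * svdD lM lm * R)ᵀ * (Q * svdD lM lm * R)
      = Rᵀ * ((svdD lM lm)ᵀ * (svdD lM lm)) * R := by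
    simp only [Matrix.transpose_mul, Matrix.mul_assoc]
    rw [← Matrix.mul_assoc Qᵀ Q, hQ', Matrix.one_mul]
  rw [e2, Matrix.mul_assoc, Matrix.trace_mul_comm, Matrix.mul_assoc, hR, Matrix.mul_one]
  simp [Matrix.trace, Matrix.diag, Matrix.mul_apply, svdD, Fin.sum_univ_three, Fin.sum_univ_two,
    sq]

/-- a.e. function below a constant with matching integral is a.e. constant -/
lemma ae_eq_const_of_le {α : Type*} [MeasurableSpace α] {μ : Measure α}
    [IsProbabilityMeasure μ] {φ : α → ℝ} {c : ℝ} (hφ : Integrable φ μ)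
    (hle : ∀ᵐ x ∂μ, φ x ≤ c) (hint : ∫ x, φ x ∂μ = c) : ∀ᵐ x ∂μ, φ x = c := by
  have h0 : 0 ≤ᵐ[μ] fun x => c - φ x := hle.mono fun x hx => by simp [hx]
  have hi : Integrable (fun x => c - φ x) μ := (integrable_const c).sub hφ
  have hz : ∫ x, (c - φ x) ∂μ = 0 := by
    rw [integral_sub (integrable_const c) hφ, hint, integral_const]; simp
  have hae := (integral_eq_zero_iff_of_nonneg_ae h0 hi).mp hz
  filter_upwards [hae] with x hx
  have : c - φ x = 0 := hx
  linarith

lemma vec_eq_of_dot {w e : Fin 3 → ℝ} {c : ℝ} (hw : w ⬝ᵥ w ≤ c ^ 2) (he : e ⬝ᵥ e = 1)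
    (hew : e ⬝ᵥ w = c) : w = c • e := by
  have hexp : ∑ i : Fin 3, (w i - c * e i) ^ 2
      = w ⬝ᵥ w - 2 * c * (e ⬝ᵥ w) + c ^ 2 * (e ⬝ᵥ e) := by
    simp only [dotProduct, Fin.sum_univ_three]; ring
  have hs : ∑ i : Fin 3, (w i - c * e i) ^ 2 ≤ 0 := by
    rw [hexp, he, hew]; nlinarith [hw]
  have h1 : (0:ℝ) ≤ ∑ i : Fin 3, (w i - c * e i) ^ 2 :=
    Finset.sum_nonneg fun i _ => sq_nonneg _
  have hz := (Finset.sum_eq_zero_iff_of_nonneg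
    (fun i _ => sq_nonneg (w i - c * e i))).mp (le_antisymm hs h1)
  funext i
  have := hz i (Finset.mem_univ i)
  have h2 : w i - c * e i = 0 := by
    have := sq_eq_zero_iff.mp this
    exact this
  have : w i = c * e i := by linarith
  simpa [Pi.smul_apply, smul_eq_mul] using this

lemma dot_le_of_sq {e w : Fin 3 → ℝ} {c : ℝ} (hc : 0 ≤ c) (he : e ⬝ᵥ e = 1)
    (hw : w ⬝ᵥ w ≤ c ^ 2) : e ⬝ᵥ w ≤ c := by
  have hcs := Finset.sum_mul_sq_le_sq_mul_sq Finset.univ e w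
  have hee : ∑ i : Fin 3, e i ^ 2 = 1 := by
    simpa [dotProduct, sq] using he
  have hww : ∑ i : Fin 3, w i ^ 2 = w ⬝ᵥ w := by
    simp [dotProduct, sq]
  have hd : e ⬝ᵥ w = ∑ i : Fin 3, e i * w i := rfl
  rw [hee, hww] at hcs
  rw [hd]
  nlinarith [hcs, hw, hc]

lemma vec_eq_zero_of_dot {w : Fin 3 → ℝ} (h : w ⬝ᵥ w = 0) : w = 0 := by
  have h3 : w 0 * w 0 + w 1 * w 1 + w 2 * w 2 = 0 := by
    simpa [dotProduct, Fin.sum_univ_three] using h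
  have h0 : w 0 = 0 := by nlinarith [sq_nonneg (w 0), sq_nonneg (w 1), sq_nonneg (w 2)]
  have h1 : w 1 = 0 := by nlinarith [sq_nonneg (w 0), sq_nonneg (w 1), sq_nonneg (w 2)]
  have h2 : w 2 = 0 := by nlinarith [sq_nonneg (w 0), sq_nonneg (w 1), sq_nonneg (w 2)]
  funext i
  fin_cases i
  · simpa using h0
  · simpa using h1
  · simpa using h2

theorem stmt_17 (Fb : Matrix (Fin 3) (Fin 2) ℝ) (lM lm : ℝ)
    (hsv : HasSingularValues Fb lM lm) (hlt : lm < lM)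
    (ν : Measure (Fin 3 → Fin 2 → ℝ)) [IsProbabilityMeasure ν]
    (hcpt : ∃ K : Set (Fin 3 → Fin 2 → ℝ), IsCompact K ∧ ν Kᶜ = 0)
    (hbar : (∫ G, G ∂ν) = fun i j => Fb i j)
    (hsing : ∀ᵐ G ∂ν, HasSingularValues (Matrix.of G) lM lm) :
    ν = Measure.dirac (fun i j => Fb i j) := by
  classical
  obtain ⟨hab, hb0, Q, R, hQ, hQdet, hR, hF⟩ := hsv
  have hQ' : Qᵀ * Q = 1 := mul_eq_one_comm.mp hQ
  have hR' : Rᵀ * R = 1 := mul_eq_one_comm.mp hR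
  have hM0 : 0 < lM := lt_of_le_of_lt hb0 hlt
  set e1 : Fin 3 → ℝ := fun i => Q i 0 with he1
  set e2 : Fin 3 → ℝ := fun i => Q i 1 with he2
  set f1 : Fin 2 → ℝ := fun j => R 0 j with hf1
  set f2 : Fin 2 → ℝ := fun j => R 1 j with hf2
  -- orthonormality of e1, e2 (columns of Q)
  have hee : ∀ a b : Fin 3, ∑ i : Fin 3, Q i a * Q i b = if a = b then 1 else 0 := by
    intro a b
    have := congrFun (congrFun hQ' a) b
    simpa [Matrix.mul_apply, Matrix.one_apply] using this
  have he11 : e1 ⬝ᵥ e1 = 1 := hee 0 0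
  have he22 : e2 ⬝ᵥ e2 = 1 := hee 1 1
  -- completeness of f1, f2 (rows of R)
  have hcomp : ∀ j k : Fin 2, f1 j * f1 k + f2 j * f2 k = if j = k then 1 else 0 := by
    intro j k
    have := congrFun (congrFun hR' j) k
    simpa [Matrix.mul_apply, Matrix.one_apply, Fin.sum_univ_two, hf1, hf2] using this
  -- unit norms of f1, f2 (rows of R, from R * Rᵀ = 1)
  have hff : ∀ a b : Fin 2, ∑ j : Fin 2, R a j * R b j = if a = b then 1 else 0 := by
    intro a b
    have := congrFun (congrFun hR a) b
    simpa [Matrix.mul_apply, Matrix.one_apply] using this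
  have hf11 : f1 ⬝ᵥ f1 = 1 := hff 0 0
  have hf22 : f2 ⬝ᵥ f2 = 1 := hff 1 1
  -- integrability of coordinates
  obtain ⟨K, hKc, hK0⟩ := hcpt
  obtain ⟨C, hC⟩ := (Bornology.IsBounded.exists_norm_le hKc.isBounded : ∃ C, ∀ x ∈ K, ‖x‖ ≤ C)
  have haeK : ∀ᵐ G ∂ν, G ∈ K := by
    rw [MeasureTheory.ae_iff]
    exact hK0
  have haeC : ∀ᵐ G ∂ν, ‖G‖ ≤ C := haeK.mono fun G hG => hC G hG
  have hij : ∀ i j, Integrable (fun G : Fin 3 → Fin 2 → ℝ => G i j) ν := by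
    intro i j
    have hm : Measurable fun G : Fin 3 → Fin 2 → ℝ => G i j :=
      (measurable_pi_apply j).comp (measurable_pi_apply i)
    refine Integrable.mono' (integrable_const C) hm.aestronglyMeasurable ?_
    filter_upwards [haeC] with G hG
    exact (norm_le_pi_norm (G i) j).trans ((norm_le_pi_norm G i).trans hG)
  have hid : Integrable (fun G : Fin 3 → Fin 2 → ℝ => G) ν :=
    Integrable.mono' (integrable_const C) aestronglyMeasurable_id haeC
  have hidi : ∀ i, Integrable (fun G : Fin 3 → Fin 2 → ℝ => G i) ν := by
    intro i
    refine Integrable.mono' (integrable_const C)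
      ((measurable_pi_apply i).aestronglyMeasurable) ?_
    filter_upwards [haeC] with G hG
    exact (norm_le_pi_norm G i).trans hG
  have hIij : ∀ i j, (∫ G, G i j ∂ν) = Fb i j := by
    intro i j
    have h1 := (ContinuousLinearMap.proj (R := ℝ)
      (φ := fun _ : Fin 3 => Fin 2 → ℝ) i).integral_comp_comm hid
    have h2 := (ContinuousLinearMap.proj (R := ℝ)
      (φ := fun _ : Fin 2 => ℝ) j).integral_comp_comm (hidi i)
    simp only [ContinuousLinearMap.proj_apply] at h1 h2
    rw [h2, h1, hbar]
  -- integral of bilinear functionals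
  have hbil : ∀ (u : Fin 3 → ℝ) (v : Fin 2 → ℝ),
      Integrable (fun G : Fin 3 → Fin 2 → ℝ => u ⬝ᵥ (Matrix.of G *ᵥ v)) ν ∧
      (∫ G, u ⬝ᵥ (Matrix.of G *ᵥ v) ∂ν) = u ⬝ᵥ (Fb *ᵥ v) := by
    intro u v
    have hfun : (fun G : Fin 3 → Fin 2 → ℝ => u ⬝ᵥ (Matrix.of G *ᵥ v))
        = fun G => ∑ i : Fin 3, ∑ j : Fin 2, u i * (G i j * v j) := by
      funext G
      simp [dotProduct, Matrix.mulVec, Finset.mul_sum, mul_add]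
    have hI : ∀ (i : Fin 3) (j : Fin 2),
        Integrable (fun G : Fin 3 → Fin 2 → ℝ => u i * (G i j * v j)) ν :=
      fun i j => ((hij i j).mul_const (v j)).const_mul (u i)
    constructor
    · rw [hfun]
      exact integrable_finset_sum _ fun i _ => integrable_finset_sum _ fun j _ => hI i j
    · rw [hfun]
      rw [integral_finset_sum _ fun i _ => integrable_finset_sum _ fun j _ => hI i j]
      have : ∀ i : Fin 3, (∫ G, ∑ j : Fin 2, u i * (G i j * v j) ∂ν)
          = ∑ j : Fin 2, u i * (Fb i j * v j) := by
        intro i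
        rw [integral_finset_sum _ fun j _ => hI i j]
        refine Finset.sum_congr rfl fun j _ => ?_
        rw [show (fun G : Fin 3 → Fin 2 → ℝ => u i * (G i j * v j))
          = fun G => u i * (G i j * v j) from rfl, MeasureTheory.integral_const_mul,
          MeasureTheory.integral_mul_const, hIij]
      rw [Finset.sum_congr rfl fun i _ => this i]
      simp [dotProduct, Matrix.mulVec, Finset.mul_sum, mul_add]
  -- the barycenter values
  have hFb1 : e1 ⬝ᵥ (Fb *ᵥ f1) = lM := by
    have hf1v : f1 = Rᵀ *ᵥ Pi.single 0 1 := by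
      rw [Matrix.mulVec_single_one]; rfl
    have he1v : e1 = Q *ᵥ Pi.single 0 1 := by
      rw [Matrix.mulVec_single_one]
      funext i
      rfl
    have hmv : Fb *ᵥ f1 = Q *ᵥ (svdD lM lm *ᵥ Pi.single 0 1) := by
      rw [hf1v, hF, Matrix.mulVec_mulVec, Matrix.mul_assoc (Q * svdD lM lm) R Rᵀ, hR,
        Matrix.mul_one, ← Matrix.mulVec_mulVec]
    rw [hmv, he1v, svd_iso Q hQ']
    simp [svdD, Matrix.mulVec, dotProduct, Pi.single_apply, Fin.sum_univ_three,
      Fin.sum_univ_two]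
  have hFb2 : e2 ⬝ᵥ (Fb *ᵥ f2) = lm := by
    have hf2v : f2 = Rᵀ *ᵥ Pi.single 1 1 := by
      rw [Matrix.mulVec_single_one]; rfl
    have he2v : e2 = Q *ᵥ Pi.single 1 1 := by
      rw [Matrix.mulVec_single_one]
      funext i
      rfl
    have hmv : Fb *ᵥ f2 = Q *ᵥ (svdD lM lm *ᵥ Pi.single 1 1) := by
      rw [hf2v, hF, Matrix.mulVec_mulVec, Matrix.mul_assoc (Q * svdD lM lm) R Rᵀ, hR,
        Matrix.mul_one, ← Matrix.mulVec_mulVec]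
    rw [hmv, he2v, svd_iso Q hQ']
    simp [svdD, Matrix.mulVec, dotProduct, Pi.single_apply, Fin.sum_univ_three,
      Fin.sum_univ_two]
  -- step 1
  have hwb1 : ∀ G : Fin 3 → Fin 2 → ℝ, HasSingularValues (Matrix.of G) lM lm →
      (Matrix.of G *ᵥ f1) ⬝ᵥ (Matrix.of G *ᵥ f1) ≤ lM ^ 2 := by
    intro G hG
    have := svd_opnorm hG f1
    rwa [hf11, mul_one] at this
  have hbd1 : ∀ᵐ G ∂ν, e1 ⬝ᵥ (Matrix.of G *ᵥ f1) ≤ lM := by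
    filter_upwards [hsing] with G hG
    exact dot_le_of_sq hM0.le he11 (hwb1 G hG)
  have heq1 : ∀ᵐ G ∂ν, e1 ⬝ᵥ (Matrix.of G *ᵥ f1) = lM :=
    ae_eq_const_of_le (hbil e1 f1).1 hbd1 ((hbil e1 f1).2.trans hFb1)
  have hstep1 : ∀ᵐ G ∂ν, Matrix.of G *ᵥ f1 = lM • e1 := by
    filter_upwards [hsing, heq1] with G hG hGe
    exact vec_eq_of_dot (hwb1 G hG) he11 hGe
  -- step 2 norm identity
  have c00 : f1 0 * f1 0 + f2 0 * f2 0 = 1 := by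
    simpa [show (0 : Fin 2) ≠ 1 from by decide] using hcomp 0 0
  have c01 : f1 0 * f1 1 + f2 0 * f2 1 = 0 := by
    simpa [show (0 : Fin 2) ≠ 1 from by decide] using hcomp 0 1
  have c11 : f1 1 * f1 1 + f2 1 * f2 1 = 1 := by
    simpa [show (0 : Fin 2) ≠ 1 from by decide] using hcomp 1 1
  have hstep2n : ∀ᵐ G ∂ν, (Matrix.of G *ᵥ f2) ⬝ᵥ (Matrix.of G *ᵥ f2) = lm ^ 2 := by
    filter_upwards [hsing, hstep1] with G hG h1
    have hfr := svd_frob hG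
    have hrow : ∀ g : Fin 2 → ℝ, (g ⬝ᵥ f1) ^ 2 + (g ⬝ᵥ f2) ^ 2 = g 0 ^ 2 + g 1 ^ 2 := by
      intro g
      simp only [dotProduct, Fin.sum_univ_two]
      linear_combination (g 0) ^ 2 * c00 + 2 * g 0 * g 1 * c01 + (g 1) ^ 2 * c11
    have hdsq : ∀ v : Fin 2 → ℝ, (Matrix.of G *ᵥ v) ⬝ᵥ (Matrix.of G *ᵥ v)
        = ∑ i : Fin 3, ((fun j => G i j) ⬝ᵥ v) ^ 2 := by
      intro v
      simp [dotProduct, Matrix.mulVec, sq]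
    have hsum : (Matrix.of G *ᵥ f1) ⬝ᵥ (Matrix.of G *ᵥ f1)
        + (Matrix.of G *ᵥ f2) ⬝ᵥ (Matrix.of G *ᵥ f2) = lM ^ 2 + lm ^ 2 := by
      rw [hdsq f1, hdsq f2, ← Finset.sum_add_distrib,
        Finset.sum_congr rfl fun i _ => hrow (fun j => G i j)]
      simpa [Fin.sum_univ_two] using hfr
    have h1d : (Matrix.of G *ᵥ f1) ⬝ᵥ (Matrix.of G *ᵥ f1) = lM ^ 2 := by
      rw [h1, smul_dotProduct, dotProduct_smul, he11]
      simp only [smul_eq_mul, mul_one, sq]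
    linarith [hsum, h1d]
  -- step 2
  have hstep2 : ∀ᵐ G ∂ν, Matrix.of G *ᵥ f2 = lm • e2 := by
    rcases eq_or_lt_of_le hb0 with hlm0 | hlm0
    · filter_upwards [hstep2n] with G hG
      have hw : (Matrix.of G *ᵥ f2) ⬝ᵥ (Matrix.of G *ᵥ f2) = 0 := by
        rw [hG, ← hlm0]; ring
      rw [← hlm0, zero_smul]
      exact vec_eq_zero_of_dot hw
    · have hbd2 : ∀ᵐ G ∂ν, e2 ⬝ᵥ (Matrix.of G *ᵥ f2) ≤ lm := by
        filter_upwards [hstep2n] with G hG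
        exact dot_le_of_sq hlm0.le he22 (le_of_eq hG)
      have heq2 : ∀ᵐ G ∂ν, e2 ⬝ᵥ (Matrix.of G *ᵥ f2) = lm :=
        ae_eq_const_of_le (hbil e2 f2).1 hbd2 ((hbil e2 f2).2.trans hFb2)
      filter_upwards [hstep2n, heq2] with G hG hGe
      exact vec_eq_of_dot (le_of_eq hG) he22 hGe
  -- conclusion: a.e. equal to Fb
  have hfinal : ∀ᵐ G ∂ν, G = fun i j => Fb i j := by
    filter_upwards [hstep1, hstep2] with G h1 h2
    funext i j
    have h1i := congrFun h1 i
    have h2i := congrFun h2 i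
    simp only [Matrix.mulVec, dotProduct, Fin.sum_univ_two, Pi.smul_apply,
      smul_eq_mul, Matrix.of_apply] at h1i h2i
    have hFbij : Fb i j = lM * e1 i * f1 j + lm * e2 i * f2 j := by
      rw [hF]
      simp [Matrix.mul_apply, svdD, Fin.sum_univ_three, Fin.sum_univ_two, he1, he2, hf1, hf2]
      ring
    show G i j = Fb i j
    rw [hFbij]
    fin_cases j
    · show G i 0 = lM * e1 i * f1 0 + lm * e2 i * f2 0
      linear_combination f1 0 * h1i + f2 0 * h2i - G i 0 * c00 - G i 1 * c01
    · show G i 1 = lM * e1 i * f1 1 + lm * e2 i * f2 1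
      linear_combination f1 1 * h1i + f2 1 * h2i - G i 1 * c11 - G i 0 * c01
  -- a.e. constant implies dirac
  have hne : ν {G | ¬ G = fun i j => Fb i j} = 0 := MeasureTheory.ae_iff.mp hfinal
  ext s hs
  rw [Measure.dirac_apply' _ hs]
  by_cases hcs : (fun i j => Fb i j) ∈ s
  · rw [Set.indicator_of_mem hcs]
    have hsc : ν sᶜ = 0 := by
      refine measure_mono_null ?_ hne
      intro x hx
      simp only [Set.mem_compl_iff] at hx
      intro hxc
      exact hx (hxc ▸ hcs)
    have := measure_add_measure_compl (μ := ν) hs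
    rw [hsc, add_zero] at this
    simpa using this
  · rw [Set.indicator_of_notMem hcs]
    refine measure_mono_null ?_ hne
    intro x hx hxc
    exact hcs (hxc ▸ hx)
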